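/- Let X, Y be disjoint finite sets, t = |X|/a_1 for a positive integer a_1 dividing |X|, and m a positive integer with |Y| = (m - a_1)t. Let H be a k-graph on X ∪ Y such that every vertex v ∈ Y satisfies deg-complement(v, X Y^{k-1}) ≤ ρ·C(|Y|, k-1), where deg-complement counts non-edges among k-sets containing v with exactly one vertex in X and k-1 vertices in Y (including v). Define the (k-1)-graph 𝒢 on Y whose edges are the (k-1)-sets S ⊆ Y with deg-complement_H(S, X) < √ρ·t. Then δ_1(𝒢) ≥ (1 - m√ρ)·C(|Y|-1, k-2). -/

import Mathlib

open Finset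
open scoped Classical

/-- Let `X, Y` be disjoint sets with `|X| = a₁t` and `|Y| = (m-a₁)t`, and let `H` be a
`k`-graph on `X ∪ Y` such that every `v ∈ Y` satisfies
`deg-complement(v, XY^{k-1}) ≤ ρ·C(|Y|,k-1)` (the sum over `(k-1)`-sets `S ⊆ Y`
containing `v` of the number of `x ∈ X` with `S ∪ {x} ∉ E(H)`).  Then in the
`(k-1)`-graph `𝒢` on `Y` whose edges are the `(k-1)`-sets `S ⊆ Y` with
`deg-complement_H(S, X) < √ρ·t`, every vertex of `Y` has degree at least
`(1 - m√ρ)·C(|Y|-1, k-2)`. -/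
theorem good_sets_min_degree {V : Type*} [DecidableEq V]
    (k a₁ m t : ℕ) (hk : 3 ≤ k) (ha : 1 ≤ a₁) (ham : a₁ < m)
    (ρ : ℝ) (hρ : 0 < ρ)
    (X Y : Finset V) (hXY : Disjoint X Y)
    (hX : X.card = a₁ * t) (hY : Y.card = (m - a₁) * t)
    (H : Finset (Finset V)) (huni : ∀ e ∈ H, e.card = k)
    (hdegc : ∀ v ∈ Y,
      ((∑ S ∈ (Y.powersetCard (k - 1)).filter (fun S => v ∈ S),
        (X.card - (X.filter (fun x => insert x S ∈ H)).card) : ℕ) : ℝ)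
        ≤ ρ * ((Y.card.choose (k - 1)) : ℝ)) :
    ∀ v ∈ Y,
      (1 - (m : ℝ) * Real.sqrt ρ) * (((Y.card - 1).choose (k - 2)) : ℝ) ≤
        (((Y.powersetCard (k - 1)).filter (fun S => v ∈ S ∧
          (((X.card - (X.filter (fun x => insert x S ∈ H)).card : ℕ)) : ℝ)
            < Real.sqrt ρ * t)).card : ℝ) := by
  intro v hv
  have ht : 0 < t := by
    rcases Nat.eq_zero_or_pos t with h | h
    · exfalso
      have : Y.card = 0 := by rw [hY, h, Nat.mul_zero]
      rw [Finset.card_eq_zero] at this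
      simp [this] at hv
    · exact h
  have hYpos : 0 < Y.card := Finset.card_pos.mpr ⟨v, hv⟩
  set f : Finset V → ℕ := fun S => X.card - (X.filter (fun x => insert x S ∈ H)).card
    with hf
  set A := (Y.powersetCard (k - 1)).filter (fun S => v ∈ S) with hA
  set P : Finset V → Prop := fun S => ((f S : ℕ) : ℝ) < Real.sqrt ρ * t with hP
  set G := A.filter (fun S => P S) with hG
  set B := A.filter (fun S => ¬ P S) with hB
  have hGB : G.card + B.card = A.card := Finset.card_filter_add_card_filter_not _
  -- |A| ≥ C(|Y|-1, k-2)
  have hAcard : ((Y.card - 1).choose (k - 2)) ≤ A.card := by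
    have hinj : ∀ S ∈ (Y.erase v).powersetCard (k - 2), ∀ S' ∈ (Y.erase v).powersetCard (k - 2),
        insert v S = insert v S' → S = S' := by
      intro S hS S' hS' h
      simp only [Finset.mem_powersetCard] at hS hS'
      have h1 : v ∉ S := fun hvS => (Finset.mem_erase.mp (hS.1 hvS)).1 rfl
      have h2 : v ∉ S' := fun hvS => (Finset.mem_erase.mp (hS'.1 hvS)).1 rfl
      have := congrArg (Finset.erase · v) h
      simpa [Finset.erase_insert, h1, h2] using this
    have hmaps : ∀ S ∈ (Y.erase v).powersetCard (k - 2), insert v S ∈ A := by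
      intro S hS
      simp only [Finset.mem_powersetCard] at hS
      have h1 : v ∉ S := fun hvS => (Finset.mem_erase.mp (hS.1 hvS)).1 rfl
      simp only [hA, Finset.mem_filter, Finset.mem_powersetCard]
      refine ⟨⟨?_, ?_⟩, Finset.mem_insert_self _ _⟩
      · intro x hx
        rcases Finset.mem_insert.mp hx with rfl | hx
        · exact hv
        · exact Finset.mem_of_mem_erase (hS.1 hx)
      · rw [Finset.card_insert_of_notMem h1, hS.2]; omega
    have := Finset.card_le_card_of_injOn (fun S => insert v S) hmaps
      (fun S hS S' hS' h => hinj S hS S' hS' h)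
    rwa [Finset.card_powersetCard, Finset.card_erase_of_mem hv] at this
  -- sum bound
  have hsum : (B.card : ℝ) * (Real.sqrt ρ * t) ≤ ρ * ((Y.card.choose (k - 1)) : ℝ) := by
    have h1 : (B.card : ℝ) * (Real.sqrt ρ * t) ≤ ∑ S ∈ B, (f S : ℝ) := by
      rw [← nsmul_eq_mul]
      refine Finset.card_nsmul_le_sum B _ _ ?_
      intro S hS
      have := (Finset.mem_filter.mp hS).2
      simpa [hP] using not_lt.mp this
    have h2 : ∑ S ∈ B, (f S : ℝ) ≤ ∑ S ∈ A, (f S : ℝ) := by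
      refine Finset.sum_le_sum_of_subset_of_nonneg (Finset.filter_subset _ _) ?_
      intro S _ _; positivity
    have h3 := hdegc v hv
    rw [Nat.cast_sum] at h3
    exact h1.trans (h2.trans h3)
  have hsqrt : 0 < Real.sqrt ρ := Real.sqrt_pos.mpr hρ
  have htR : (0:ℝ) < t := by exact_mod_cast ht
  -- C(|Y|, k-1) ≤ m * t * C(|Y|-1, k-2)
  have hchoose : Y.card.choose (k - 1) ≤ m * t * ((Y.card - 1).choose (k - 2)) := by
    have h1 : (Y.card - 1) + 1 = Y.card := by omega
    have h2 : (k - 2) + 1 = k - 1 := by omega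
    have := Nat.add_one_mul_choose_eq (Y.card - 1) (k - 2)
    rw [h1, h2] at this
    have hk1 : 1 ≤ k - 1 := by omega
    calc Y.card.choose (k - 1) ≤ Y.card.choose (k - 1) * (k - 1) :=
          Nat.le_mul_of_pos_right _ (by omega)
      _ = Y.card * ((Y.card - 1).choose (k - 2)) := this.symm
      _ ≤ m * t * ((Y.card - 1).choose (k - 2)) := by
          apply Nat.mul_le_mul_right
          rw [hY]
          exact Nat.mul_le_mul_right _ (Nat.sub_le _ _)
  -- B.card ≤ m √ρ C2
  have hBbound : (B.card : ℝ) ≤ (m : ℝ) * Real.sqrt ρ * (((Y.card - 1).choose (k - 2)) : ℝ) := by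
    have key : (B.card : ℝ) * (Real.sqrt ρ * t)
        ≤ ((m : ℝ) * Real.sqrt ρ * (((Y.card - 1).choose (k - 2)) : ℝ)) * (Real.sqrt ρ * t) := by
      have : ρ * ((Y.card.choose (k - 1)) : ℝ)
          ≤ ρ * ((m * t * ((Y.card - 1).choose (k - 2)) : ℕ) : ℝ) := by
        apply mul_le_mul_of_nonneg_left _ hρ.le
        exact_mod_cast hchoose
      have hs2 : Real.sqrt ρ * Real.sqrt ρ = ρ := Real.mul_self_sqrt hρ.le
      refine hsum.trans (this.trans (le_of_eq ?_))
      push_cast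
      linear_combination (-((m:ℝ) * t * (((Y.card - 1).choose (k - 2)):ℝ))) * hs2
    exact le_of_mul_le_mul_right key (by positivity)
  -- conclude
  have hGoal : (Y.powersetCard (k - 1)).filter (fun S => v ∈ S ∧ P S) = G := by
    rw [hG, hA, Finset.filter_filter]
  have hGcast : (G.card : ℝ) = (A.card : ℝ) - (B.card : ℝ) := by
    have := hGB; push_cast [← this]; ring
  have hAcast : (((Y.card - 1).choose (k - 2)) : ℝ) ≤ (A.card : ℝ) := by exact_mod_cast hAcard
  calc (1 - (m : ℝ) * Real.sqrt ρ) * (((Y.card - 1).choose (k - 2)) : ℝ)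
      = (((Y.card - 1).choose (k - 2)) : ℝ)
        - (m : ℝ) * Real.sqrt ρ * (((Y.card - 1).choose (k - 2)) : ℝ) := by ring
    _ ≤ (A.card : ℝ) - (B.card : ℝ) := by linarith
    _ = (G.card : ℝ) := hGcast.symm
    _ = _ := by rw [hGoal]
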